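/- Let p ≥ 2 be an integer, and V_k the Halley iterates for x^p = 1-z starting at 1. Then V_k(0) = 1 for every k ≥ 0, and V_k(z) = 1 - Σ_{n=1}^{3^k - 1} (Π_{r=1}^{n-1}(rp - 1)) z^n/(n! p^n) + O(z^{3^k}) near z = 0. -/

import Mathlib

open Polynomial Filter Asymptotics in
private lemma vanish_aux (c : ℂ) (hc : c ≠ 0) (W : Polynomial ℂ) (k : ℕ)
    (hdvd : X ^ k ∣ (C c * (1 - X) * derivative W + C c * W)) (h0 : W.coeff 0 = 0) :
    ∀ d ≤ k, W.coeff d = 0 := by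
  intro d
  induction d with
  | zero => exact fun _ => h0
  | succ d ih =>
    intro hdk
    have hd : d < k := by omega
    have ihd : W.coeff d = 0 := ih (by omega)
    have h1 := (X_pow_dvd_iff.1 hdvd) d hd
    have hXW : (X * derivative W).coeff d = 0 := by
      cases d with
      | zero => simp
      | succ e =>
        rw [coeff_X_mul, coeff_derivative]
        have : W.coeff (e + 1) = 0 := ih (by omega)
        simp [this]
    rw [coeff_add, mul_assoc, coeff_C_mul, coeff_C_mul, sub_mul, one_mul,
      coeff_sub, hXW, coeff_derivative, ihd] at h1
    have hne : ((d : ℂ) + 1) ≠ 0 := by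
      have h : ((d + 1 : ℕ) : ℂ) ≠ 0 := Nat.cast_ne_zero.2 (by omega)
      push_cast at h; exact h
    simp only [sub_zero, mul_zero, add_zero] at h1
    rcases mul_eq_zero.mp h1 with h | h
    · exact absurd h hc
    rcases mul_eq_zero.mp h with h | h
    · exact h
    · exact absurd h hne

private noncomputable def aa (p : ℕ) : ℕ → ℂ := fun n =>
  if n = 0 then 1 else
    -(∏ r ∈ Finset.range (n - 1), (((r : ℂ) + 1) * p - 1)) / (n.factorial * (p : ℂ) ^ n)

private lemma aa_rec (p : ℕ) (hp : 2 ≤ p) (n : ℕ) :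
    (p : ℂ) * (n + 1) * aa p (n + 1) = ((p : ℂ) * n - 1) * aa p n := by
  have hpc : (p : ℂ) ≠ 0 := Nat.cast_ne_zero.2 (by omega)
  induction n with
  | zero => simp [aa]; field_simp
  | succ n _ =>
    have hfac : ((n+1).factorial : ℂ) ≠ 0 := Nat.cast_ne_zero.2 (Nat.factorial_ne_zero _)
    have hfac2 : ((n+2).factorial : ℂ) ≠ 0 := Nat.cast_ne_zero.2 (Nat.factorial_ne_zero _)
    simp only [aa, Nat.succ_ne_zero, if_false, Nat.add_sub_cancel]
    rw [Finset.prod_range_succ]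
    have e1 : ((n+2).factorial : ℂ) = (n+2) * (n+1).factorial := by
      rw [Nat.factorial_succ]; push_cast; ring
    rw [e1]
    have hn2 : ((n:ℂ)+2) ≠ 0 := by
      have h : ((n+2:ℕ):ℂ) ≠ 0 := Nat.cast_ne_zero.2 (by omega); push_cast at h; exact h
    have hpn : (p:ℂ)^n ≠ 0 := pow_ne_zero _ hpc
    field_simp
    push_cast
    ring

open Polynomial in
private noncomputable def PP (p m : ℕ) : Polynomial ℂ :=
  ∑ n ∈ Finset.range m, C (aa p n) * X ^ n

open Polynomial in
private lemma coeff_PP (p m n : ℕ) : (PP p m).coeff n = if n < m then aa p n else 0 := by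
  simp [PP, Polynomial.finset_sum_coeff, coeff_C_mul, coeff_X_pow, Finset.sum_ite_eq',
    Finset.mem_range]

open Polynomial in
private lemma Pd_dvd (p m : ℕ) (hp : 2 ≤ p) :
    X ^ (m - 1) ∣ (C (p : ℂ) * (1 - X) * derivative (PP p m) + PP p m) := by
  rw [X_pow_dvd_iff]
  intro d hd
  have hXd : (X * derivative (PP p m)).coeff d =
      (if d = 0 then 0 else (PP p m).coeff d * d) := by
    cases d with
    | zero => simp
    | succ e =>
      rw [coeff_X_mul, coeff_derivative]
      simp
  rw [coeff_add, mul_assoc, coeff_C_mul, sub_mul, one_mul, coeff_sub, hXd, coeff_derivative]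
  simp only [coeff_PP]
  rw [if_pos (by omega : d + 1 < m), if_pos (by omega : d < m)]
  have hrec := aa_rec p hp d
  cases d with
  | zero =>
    simp only [if_pos rfl]
    push_cast at hrec ⊢
    linear_combination hrec
  | succ e =>
    simp only [Nat.succ_ne_zero, if_false]
    push_cast at hrec ⊢
    linear_combination hrec

open Polynomial in
private lemma F_dvd (p m : ℕ) (hp : 2 ≤ p) (hm : 1 ≤ m) :
    X ^ m ∣ ((PP p m) ^ p - (1 - X)) := by
  set P := PP p m with hP
  set F := P ^ p - (1 - X) with hF
  have hpc : (p : ℂ) ≠ 0 := Nat.cast_ne_zero.2 (by omega)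
  have hPp : P ^ (p - 1) * P = P ^ p := by
    rw [← pow_succ]; congr 1; omega
  have hdF : derivative F = C (p : ℂ) * P ^ (p - 1) * derivative P + 1 := by
    rw [hF, derivative_sub, derivative_pow, derivative_sub, derivative_one, derivative_X]
    ring
  have key : C (p : ℂ) * (1 - X) * derivative F + C (p : ℂ) * F =
      C (p : ℂ) * P ^ (p - 1) * (C (p : ℂ) * (1 - X) * derivative P + P) := by
    rw [hdF, hF]
    linear_combination (-(C (p : ℂ))) * hPp
  have hdvd : X ^ (m - 1) ∣ (C (p : ℂ) * (1 - X) * derivative F + C (p : ℂ) * F) := by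
    rw [key]
    exact Dvd.dvd.mul_left (Pd_dvd p m hp) _
  have h0 : F.coeff 0 = 0 := by
    rw [hF, coeff_sub, coeff_zero_eq_eval_zero, eval_pow, coeff_sub]
    have : P.eval 0 = P.coeff 0 := (coeff_zero_eq_eval_zero P).symm
    rw [this, coeff_PP, if_pos (by omega)]
    simp [aa]
  rw [X_pow_dvd_iff]
  intro d hd
  exact vanish_aux (p : ℂ) hpc F (m - 1) hdvd h0 d (by omega)

private noncomputable def gg (p : ℕ) : ℂ → ℂ := fun z => (1 - z) ^ ((p : ℂ)⁻¹)

private lemma gg_zero (p : ℕ) : gg p 0 = 1 := by simp [gg]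

private lemma gg_contAt (p : ℕ) : ContinuousAt (gg p) 0 := by
  have h1 : ContinuousAt (fun z : ℂ => 1 - z) 0 := by fun_prop
  have h2 : ContinuousAt (· ^ ((p : ℂ)⁻¹)) ((1 : ℂ) - 0) := by
    rw [sub_zero]
    exact continuousAt_cpow_const Complex.one_mem_slitPlane
  exact h2.comp h1

private lemma ev_sub_ne : ∀ᶠ z : ℂ in nhds 0, (1 : ℂ) - z ≠ 0 := by
  have h1 : ContinuousAt (fun z : ℂ => 1 - z) 0 := by fun_prop
  have := h1.eventually_ne (by norm_num : (1:ℂ) - 0 ≠ 0)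
  simpa using this

private lemma gg_pow (p : ℕ) (hp : 2 ≤ p) : ∀ᶠ z : ℂ in nhds 0, (gg p z) ^ p = 1 - z := by
  filter_upwards [ev_sub_ne] with z hz
  have hpc : (p : ℂ) ≠ 0 := Nat.cast_ne_zero.2 (by omega)
  rw [gg, Complex.cpow_def_of_ne_zero hz, ← Complex.exp_nat_mul]
  rw [show (p : ℂ) * (Complex.log (1 - z) * (p : ℂ)⁻¹) = Complex.log (1 - z) by
    field_simp]
  exact Complex.exp_log hz

private lemma gg_ne (p : ℕ) : ∀ᶠ z : ℂ in nhds 0, gg p z ≠ 0 := by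
  have := (gg_contAt p).eventually_ne (by rw [gg_zero]; norm_num : gg p 0 ≠ 0)
  simpa using this

open Polynomial in
private lemma hh_eval (p m : ℕ) (z : ℂ) :
    (PP p m).eval z = ∑ n ∈ Finset.range m, aa p n * z ^ n := by
  simp [PP, eval_finset_sum]

open Polynomial in
private lemma hh_zero (p m : ℕ) (hm : 1 ≤ m) : (PP p m).eval 0 = 1 := by
  rw [hh_eval]
  rw [Finset.sum_eq_single 0]
  · simp [aa]
  · intro b _ hb; simp [zero_pow hb]
  · intro h; exact absurd (Finset.mem_range.2 (by omega)) h

open Polynomial Filter Asymptotics in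
private lemma hm_sub_g (p m : ℕ) (hp : 2 ≤ p) (hm : 1 ≤ m) :
    (fun z : ℂ => (∑ n ∈ Finset.range m, aa p n * z ^ n) - gg p z) =O[nhds 0]
      (fun z => z ^ m) := by
  have hpc : (p : ℂ) ≠ 0 := Nat.cast_ne_zero.2 (by omega)
  obtain ⟨Fq, hFq⟩ := F_dvd p m hp hm
  set hh : ℂ → ℂ := fun z => (PP p m).eval z with hhh
  have hev : ∀ z : ℂ, hh z ^ p - (1 - z) = z ^ m * Fq.eval z := by
    intro z
    have := congrArg (Polynomial.eval z) hFq
    simpa using this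
  set S : ℂ → ℂ := fun z => ∑ i ∈ Finset.range p, hh z ^ i * gg p z ^ (p - 1 - i) with hSS
  have hhcont : ContinuousAt hh 0 := (Polynomial.continuous _).continuousAt
  have hh0 : hh 0 = 1 := hh_zero p m hm
  have hhtend : Tendsto hh (nhds 0) (nhds 1) := hh0 ▸ hhcont.tendsto
  have hgtend : Tendsto (gg p) (nhds 0) (nhds 1) := (gg_zero p) ▸ (gg_contAt p).tendsto
  have hStend : Tendsto S (nhds 0) (nhds (p : ℂ)) := by
    have : Tendsto S (nhds 0) (nhds (∑ i ∈ Finset.range p, (1:ℂ) ^ i * 1 ^ (p - 1 - i))) :=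
      tendsto_finset_sum _ fun i _ => (hhtend.pow i).mul (hgtend.pow (p - 1 - i))
    simpa using this
  have hSne : ∀ᶠ z : ℂ in nhds 0, S z ≠ 0 := hStend.eventually_ne hpc
  have hkey : ∀ᶠ z : ℂ in nhds 0,
      hh z - gg p z = z ^ m * Fq.eval z * (S z)⁻¹ := by
    filter_upwards [hSne, gg_pow p hp] with z h1 h2
    have hg : S z * (hh z - gg p z) = hh z ^ p - gg p z ^ p := geom_sum₂_mul _ _ _
    have h3 : hh z ^ p - gg p z ^ p = z ^ m * Fq.eval z := by rw [h2, hev]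
    rw [h3] at hg
    rw [eq_mul_inv_iff_mul_eq₀ h1]
    linear_combination hg
  have hO : (fun z : ℂ => z ^ m * Fq.eval z * (S z)⁻¹) =O[nhds 0] (fun z => z ^ m) := by
    have h1 : Tendsto (fun z : ℂ => Fq.eval z * (S z)⁻¹) (nhds 0)
        (nhds (Fq.eval 0 * (p : ℂ)⁻¹)) :=
      ((Polynomial.continuous _).continuousAt.tendsto).mul (hStend.inv₀ hpc)
    have h2 := (isBigO_refl (fun z : ℂ => z ^ m) (nhds 0)).mul (h1.isBigO_one ℂ)
    simpa [mul_assoc] using h2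
  have hkey' : (fun z : ℂ => hh z - gg p z) =ᶠ[nhds 0]
      (fun z : ℂ => z ^ m * Fq.eval z * (S z)⁻¹) := hkey
  have := hO.congr' hkey'.symm (Filter.EventuallyEq.refl _ _)
  simpa [hhh, hh_eval] using this

open Polynomial in
private lemma HH_dvd (p : ℕ) (hp : 2 ≤ p) :
    (X : ℂ[X]) ^ 3 ∣ (C ((p:ℂ) - 1) * (1 + X) ^ (p + 1) - C ((p:ℂ) + 1) * (1 + X) ^ p
      + C ((p:ℂ) + 1) * (1 + X) - C ((p:ℂ) - 1)) := by
  have hcoeff : ∀ n k : ℕ, (((1 : ℂ[X]) + X) ^ n).coeff k = (n.choose k : ℂ) := by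
    intro n k
    rw [show ((1 : ℂ[X]) + X) = X + 1 by ring, coeff_X_add_one_pow]
  have e1 : ((p+1).choose 2 : ℂ) * 2 = ((p:ℂ) + 1) * p := by
    have h := Nat.add_one_mul_choose_eq p 1
    simp only [Nat.succ_eq_add_one, Nat.choose_one_right] at h
    have hc := congrArg (Nat.cast : ℕ → ℂ) h
    push_cast at hc
    linear_combination -hc
  have e2 : (p.choose 2 : ℂ) * 2 = (p:ℂ) * ((p:ℂ) - 1) := by
    have h := Nat.add_one_mul_choose_eq (p - 1) 1
    simp only [Nat.succ_eq_add_one, Nat.choose_one_right] at h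
    rw [show p - 1 + 1 = p by omega] at h
    have hc := congrArg (Nat.cast : ℕ → ℂ) h
    push_cast [Nat.cast_sub (by omega : 1 ≤ p)] at hc
    linear_combination -hc
  rw [X_pow_dvd_iff]
  intro d hd
  interval_cases d
  · simp only [coeff_sub, coeff_add, coeff_C_mul, hcoeff, coeff_C, coeff_one, coeff_X_zero,
      Nat.choose_zero_right]
    norm_num
  · simp only [coeff_sub, coeff_add, coeff_C_mul, hcoeff, coeff_C, coeff_one, coeff_X_one,
      Nat.choose_one_right]
    push_cast
    ring
  · simp only [coeff_sub, coeff_add, coeff_C_mul, hcoeff, coeff_C, coeff_one, coeff_X]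
    norm_num
    linear_combination (((p:ℂ) - 1) / 2) * e1 - (((p:ℂ) + 1) / 2) * e2

open Asymptotics in
theorem stmt_18 (p : ℕ) (hp : 2 ≤ p) (V : ℕ → ℂ → ℂ)
    (hV0 : ∀ z, V 0 z = 1)
    (hV : ∀ k z, V (k + 1) z =
      V k z * ((p - 1) * (V k z) ^ p + (p + 1) * (1 - z)) /
        ((p + 1) * (V k z) ^ p + (p - 1) * (1 - z))) :
    (∀ k, V k 0 = 1) ∧
    ∀ k, (fun z : ℂ =>
        V k z - (1 - ∑ n ∈ Finset.Icc 1 (3 ^ k - 1),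
          (∏ r ∈ Finset.range (n - 1), (((r : ℂ) + 1) * p - 1)) * z ^ n /
            (n.factorial * (p : ℂ) ^ n))) =O[nhds 0]
      fun z : ℂ => z ^ (3 ^ k) := by
  classical
  have hpc : (p : ℂ) ≠ 0 := Nat.cast_ne_zero.2 (by omega)
  have hpc2 : (2 * (p : ℂ)) ≠ 0 := mul_ne_zero two_ne_zero hpc
  have hGt : Filter.Tendsto (gg p) (nhds 0) (nhds 1) := (gg_zero p) ▸ (gg_contAt p).tendsto
  have key : ∀ k, ContinuousAt (V k) 0 ∧ V k 0 = 1 ∧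
      (fun z => V k z - gg p z) =O[nhds 0] fun z => z ^ 3 ^ k := by
    intro k
    induction k with
    | zero =>
      refine ⟨by rw [funext hV0]; exact continuousAt_const, hV0 0, ?_⟩
      have heq : (fun z : ℂ => V 0 z - gg p z)
          = fun z => (∑ n ∈ Finset.range 1, aa p n * z ^ n) - gg p z := by
        funext z; rw [hV0]; simp [aa]
      rw [heq, pow_zero]
      simpa using hm_sub_g p 1 hp le_rfl
    | succ k ih =>
      obtain ⟨hc, h1, hO⟩ := ih
      have hAt : Filter.Tendsto (V k) (nhds 0) (nhds 1) := h1 ▸ hc.tendsto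
      have hDc : ContinuousAt (fun z : ℂ => ((p:ℂ) + 1) * V k z ^ p + ((p:ℂ) - 1) * (1 - z)) 0 :=
        (continuousAt_const.mul (hc.pow p)).add (continuousAt_const.mul (by fun_prop))
      have hD0' : (fun z : ℂ => ((p:ℂ) + 1) * V k z ^ p + ((p:ℂ) - 1) * (1 - z)) 0 = 2 * p := by
        show ((p:ℂ) + 1) * V k 0 ^ p + ((p:ℂ) - 1) * (1 - 0) = 2 * p
        rw [h1]; ring
      have hDt : Filter.Tendsto (fun z : ℂ => ((p:ℂ) + 1) * V k z ^ p + ((p:ℂ) - 1) * (1 - z))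
          (nhds 0) (nhds (2 * p)) := hD0' ▸ hDc.tendsto
      have hDne : ∀ᶠ z : ℂ in nhds 0,
          ((p:ℂ) + 1) * V k z ^ p + ((p:ℂ) - 1) * (1 - z) ≠ 0 := hDt.eventually_ne hpc2
      have hD0 : ((p:ℂ) + 1) * V k 0 ^ p + ((p:ℂ) - 1) * (1 - 0) = 2 * p := by
        rw [h1]; ring
      have hval : V (k+1) 0 = 1 := by
        rw [hV k 0, h1]
        rw [show (1:ℂ) * (((p:ℂ)-1) * 1 ^ p + ((p:ℂ)+1) * (1 - 0)) = 2 * p by ring,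
          show ((p:ℂ)+1) * 1 ^ p + ((p:ℂ)-1) * (1 - 0) = 2 * p by ring,
          div_self hpc2]
      have hcont : ContinuousAt (V (k+1)) 0 := by
        rw [show V (k+1) = fun z => V k z * (((p:ℂ) - 1) * (V k z) ^ p + ((p:ℂ) + 1) * (1 - z)) /
            (((p:ℂ) + 1) * (V k z) ^ p + ((p:ℂ) - 1) * (1 - z)) from funext (hV k)]
        apply ContinuousAt.div
        · exact hc.mul ((continuousAt_const.mul (hc.pow p)).add
            (continuousAt_const.mul (by fun_prop)))
        · exact (continuousAt_const.mul (hc.pow p)).add (continuousAt_const.mul (by fun_prop))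
        · rw [hD0]; exact hpc2
      refine ⟨hcont, hval, ?_⟩
      obtain ⟨Hq, hHq⟩ := HH_dvd p hp
      set w : ℂ → ℂ := fun z => V k z / gg p z with hw
      have hwt : Filter.Tendsto w (nhds 0) (nhds 1) := by
        have := hAt.div hGt one_ne_zero
        rw [div_one] at this
        exact this
      have hkey : ∀ᶠ z : ℂ in nhds 0, V (k+1) z - gg p z
          = (w z - 1) ^ 3 * Polynomial.eval (w z - 1) Hq * gg p z ^ (p+1) /
            (((p:ℂ) + 1) * V k z ^ p + ((p:ℂ) - 1) * (1 - z)) := by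
        filter_upwards [gg_ne p, gg_pow p hp, hDne] with z hGne hGp hDz
        have hA : V k z = w z * gg p z := by
          simp only [hw]
          field_simp
        have hHev : ((p:ℂ)-1) * w z ^ (p+1) - ((p:ℂ)+1) * w z ^ p
            + ((p:ℂ)+1) * w z - ((p:ℂ)-1)
            = (w z - 1) ^ 3 * Polynomial.eval (w z - 1) Hq := by
          have h := congrArg (Polynomial.eval (w z - 1)) hHq
          simp only [Polynomial.eval_add, Polynomial.eval_sub, Polynomial.eval_mul,
            Polynomial.eval_pow, Polynomial.eval_one, Polynomial.eval_X, Polynomial.eval_C] at h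
          rw [show (1:ℂ) + (w z - 1) = w z by ring] at h
          linear_combination h
        rw [hV k z, div_sub' hDz, div_eq_div_iff hDz hDz]
        rw [hA, ← hGp]
        linear_combination (gg p z ^ (p+1) * (((p:ℂ)+1) * (w z * gg p z) ^ p
          + ((p:ℂ)-1) * gg p z ^ p)) * hHev
      have hwO : (fun z : ℂ => w z - 1) =O[nhds 0] fun z => z ^ 3 ^ k := by
        have heq : (fun z : ℂ => w z - 1) =ᶠ[nhds 0]
            fun z => (V k z - gg p z) * (gg p z)⁻¹ := by
          filter_upwards [gg_ne p] with z hGne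
          simp only [hw]
          field_simp
        have h2 := hO.mul ((hGt.inv₀ one_ne_zero).isBigO_one ℂ)
        simp only [mul_one] at h2
        exact h2.congr' heq.symm (Filter.EventuallyEq.refl _ _)
      have hcube : (fun z : ℂ => (w z - 1) ^ 3) =O[nhds 0] fun z => z ^ 3 ^ (k+1) := by
        have h3 := hwO.pow 3
        have hexp : 3 ^ k * 3 = 3 ^ (k+1) := by rw [pow_succ]
        simpa [← pow_mul, hexp] using h3
      have hrest : Filter.Tendsto (fun z : ℂ => Polynomial.eval (w z - 1) Hq *
          gg p z ^ (p+1) / (((p:ℂ) + 1) * V k z ^ p + ((p:ℂ) - 1) * (1 - z)))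
          (nhds 0) (nhds (Polynomial.eval 0 Hq * 1 ^ (p+1) / (2 * p))) := by
        have ht1 : Filter.Tendsto (fun z : ℂ => w z - 1) (nhds 0) (nhds 0) := by
          have := hwt.sub_const 1
          simpa using this
        exact (((Polynomial.continuous Hq).continuousAt.tendsto.comp ht1).mul
          (hGt.pow (p+1))).div hDt hpc2
      have hbig := hcube.mul (hrest.isBigO_one ℂ)
      simp only [mul_one] at hbig
      have heq2 : (fun z : ℂ => V (k+1) z - gg p z) =ᶠ[nhds 0]
          (fun z : ℂ => (w z - 1) ^ 3 * (Polynomial.eval (w z - 1) Hq * gg p z ^ (p+1) /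
            (((p:ℂ) + 1) * V k z ^ p + ((p:ℂ) - 1) * (1 - z)))) := by
        filter_upwards [hkey] with z hz
        rw [hz]; ring
      exact hbig.congr' heq2.symm (Filter.EventuallyEq.refl _ _)
  refine ⟨fun k => (key k).2.1, fun k => ?_⟩
  have hm1 : 1 ≤ 3 ^ k := Nat.one_le_pow _ _ (by norm_num)
  have hsum : ∀ z : ℂ, (1 - ∑ n ∈ Finset.Icc 1 (3 ^ k - 1),
      (∏ r ∈ Finset.range (n - 1), (((r : ℂ) + 1) * p - 1)) * z ^ n /
        (n.factorial * (p : ℂ) ^ n)) = ∑ n ∈ Finset.range (3 ^ k), aa p n * z ^ n := by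
    intro z
    have hins : Finset.range (3 ^ k) = insert 0 (Finset.Icc 1 (3 ^ k - 1)) := by
      ext n; simp only [Finset.mem_range, Finset.mem_insert, Finset.mem_Icc]; omega
    rw [hins, Finset.sum_insert (by simp)]
    have h0 : aa p 0 * z ^ 0 = 1 := by simp [aa]
    rw [h0]
    have hterm : ∑ n ∈ Finset.Icc 1 (3 ^ k - 1), aa p n * z ^ n
        = -∑ n ∈ Finset.Icc 1 (3 ^ k - 1),
          (∏ r ∈ Finset.range (n - 1), (((r : ℂ) + 1) * p - 1)) * z ^ n /
            (n.factorial * (p : ℂ) ^ n) := by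
      rw [← Finset.sum_neg_distrib]
      apply Finset.sum_congr rfl
      intro n hn
      have hn1 : n ≠ 0 := by simp only [Finset.mem_Icc] at hn; omega
      simp only [aa, hn1, if_false]
      ring
    rw [hterm]
    ring
  have hVg := (key k).2.2
  have hgS := (hm_sub_g p (3 ^ k) hp hm1).neg_left
  have := hVg.add hgS
  refine this.congr' ?_ (Filter.EventuallyEq.refl _ _)
  apply Filter.EventuallyEq.of_eq
  funext z
  rw [← hsum z]
  ring
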